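/- Let P be a regular Markov chain on state space [N] with stationary distribution π and spectral expansion λ. Let m ≥ 1, ℓ ≥ 0, t > 0, and let H_1,…,H_N ∈ ℂ^{m×m} satisfy ‖H_i‖₂ ≤ ℓ for all i and Σ_{i∈[N]} π_i H_i = 0. Let E ∈ ℂ^{Nm×Nm} be the block-diagonal matrix with i-th diagonal block exp(tH_i), and let P̃ := P ⊗ I_m. Then for every z ∈ ℂ^{Nm}, ‖( P̃ᵀ E* z^∥ )^⊥‖_π ≤ λ·(exp(tℓ) − 1)·‖z^∥‖_π. -/

import Mathlib

open scoped BigOperators Kronecker ComplexOrder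
open Matrix

/-- A (row-stochastic) Markov chain on a finite state space: nonnegative entries, rows sum to 1. -/
def IsMarkov {S : Type*} [Fintype S] (P : Matrix S S ℝ) : Prop :=
  (∀ i j, 0 ≤ P i j) ∧ ∀ i, ∑ j, P i j = 1

/-- A Markov chain is regular if some positive power has all entries strictly positive. -/
def IsRegularMC {S : Type*} [Fintype S] [DecidableEq S] (P : Matrix S S ℝ) : Prop :=
  ∃ k : ℕ, 0 < k ∧ ∀ i j, 0 < (P ^ k) i j

/-- `π` is a stationary distribution of `P`: strictly positive entries, sums to 1, `πᵀ P = πᵀ`. -/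
def IsStationaryMC {S : Type*} [Fintype S] (P : Matrix S S ℝ) (π : S → ℝ) : Prop :=
  (∀ i, 0 < π i) ∧ (∑ i, π i = 1) ∧ ∀ j, ∑ i, π i * P i j = π j

/-- A probability vector. -/
def IsProbVec {S : Type*} [Fintype S] (φ : S → ℝ) : Prop :=
  (∀ i, 0 ≤ φ i) ∧ ∑ i, φ i = 1

/-- The `π`-norm of a real vector `φ`: `‖φ‖_π = sqrt (∑ i, φ i ^ 2 / π i)`. -/
noncomputable def piNormR {S : Type*} [Fintype S] (π φ : S → ℝ) : ℝ :=
  Real.sqrt (∑ i, φ i ^ 2 / π i)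

/-- The `π`-inner product `⟨x, y⟩_π = y* Π⁻¹ x` on `ℂ^S`. -/
noncomputable def piInner {S : Type*} [Fintype S] (π : S → ℝ) (x y : S → ℂ) : ℂ :=
  ∑ i, (starRingEnd ℂ) (y i) * x i / (π i : ℂ)

/-- The `π`-norm of a complex vector. -/
noncomputable def piNorm {S : Type*} [Fintype S] (π : S → ℝ) (x : S → ℂ) : ℝ :=
  Real.sqrt (∑ i, ‖x i‖ ^ 2 / π i)

/-- The spectral expansion `λ(P)`: the supremum of `‖Pᵀ x‖_π / ‖x‖_π` over nonzero `x`
with `⟨x, π⟩_π = 0`. -/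
noncomputable def specExp {S : Type*} [Fintype S] (P : Matrix S S ℝ) (π : S → ℝ) : ℝ :=
  sSup {r : ℝ | ∃ x : S → ℂ, x ≠ 0 ∧ piInner π x (fun i => (π i : ℂ)) = 0 ∧
    r = piNorm π ((P.map Complex.ofReal)ᵀ *ᵥ x) / piNorm π x}

/-- The spectral (operator 2-)norm of a matrix. -/
noncomputable def spectralNormM {𝕜 : Type*} [RCLike 𝕜] {m n : Type*} [Fintype m] [Fintype n]
    (A : Matrix m n 𝕜) : ℝ :=
  sSup {r : ℝ | ∃ x : n → 𝕜, x ≠ 0 ∧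
    r = Real.sqrt (∑ i, ‖(A *ᵥ x) i‖ ^ 2) / Real.sqrt (∑ j, ‖x j‖ ^ 2)}

/-- The probability that a `k`-step random walk on `P` started from `φ` follows the
trajectory `v`, i.e. `φ (v 1) * ∏ j, P (v j) (v (j+1))`. -/
noncomputable def walkWeight {S : Type*} [Fintype S] (P : Matrix S S ℝ) (φ : S → ℝ)
    {k : ℕ} (v : Fin k → S) : ℝ :=
  if h : 0 < k then
    φ (v ⟨0, h⟩) * ∏ j : Fin (k - 1),
      P (v ⟨(j : ℕ), by have := j.isLt; omega⟩) (v ⟨(j : ℕ) + 1, by have := j.isLt; omega⟩)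
  else 0

/-- The probability of an event `E` under a `k`-step random walk on `P` started from `φ`. -/
noncomputable def walkProb {S : Type*} [Fintype S] (P : Matrix S S ℝ) (φ : S → ℝ)
    {k : ℕ} (E : Set (Fin k → S)) : ℝ :=
  ∑ v : Fin k → S, E.indicator (fun u => walkWeight P φ u) v

/-- The matrix exponential, `exp A = ∑ A^k / k!`. -/
noncomputable def mexp {m : Type*} [Fintype m] [DecidableEq m]
    (A : Matrix m m ℂ) : Matrix m m ℂ :=
  ∑' k : ℕ, ((k.factorial : ℂ)⁻¹) • A ^ k

/-- The block-diagonal matrix `diag (M 1, …, M N)`. -/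
def blockDiag' {S m : Type*} [DecidableEq S] (M : S → Matrix m m ℂ) :
    Matrix (S × m) (S × m) ℂ :=
  Matrix.of fun p q => if p.1 = q.1 then M p.1 p.2 q.2 else 0

/-- The `π`-inner product `⟨x, y⟩_π = y* (Π⁻¹ ⊗ I_m) x` on `ℂ^{N m}`. -/
noncomputable def piInnerKron {N m : ℕ} (π : Fin N → ℝ) (x y : Fin N × Fin m → ℂ) : ℂ :=
  ∑ p, (starRingEnd ℂ) (y p) * x p / (π p.1 : ℂ)

/-- The `π`-norm on `ℂ^{N m}`. -/
noncomputable def piNormKron {N m : ℕ} (π : Fin N → ℝ) (x : Fin N × Fin m → ℂ) : ℝ :=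
  Real.sqrt (∑ p, ‖x p‖ ^ 2 / π p.1)

/-- Membership in the subspace `U = {π ⊗ w : w ∈ ℂ^m}`. -/
def memU {N m : ℕ} (π : Fin N → ℝ) (x : Fin N × Fin m → ℂ) : Prop :=
  ∃ w : Fin m → ℂ, ∀ p, x p = (π p.1 : ℂ) * w p.2

/-- `π`-orthogonality to the subspace `U = {π ⊗ w : w ∈ ℂ^m}`. -/
noncomputable def perpU {N m : ℕ} (π : Fin N → ℝ) (x : Fin N × Fin m → ℂ) : Prop :=
  ∀ w : Fin m → ℂ, piInnerKron π x (fun p => (π p.1 : ℂ) * w p.2) = 0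

section AuxAnalytic
open scoped Matrix.Norms.L2Operator
open NormedSpace

private lemma norm_mexp_sub_one_le {m : ℕ} (A : Matrix (Fin m) (Fin m) ℂ) :
    ‖mexp A - 1‖ ≤ Real.exp ‖A‖ - 1 := by
  have hf : Summable (fun n : ℕ => ((n.factorial : ℂ)⁻¹) • A ^ n) := expSeries_summable' A
  have h0 : mexp A - 1 = ∑' n : ℕ, (((n+1).factorial : ℂ)⁻¹) • A ^ (n+1) := by
    rw [mexp, Summable.tsum_eq_zero_add hf]; simp
  have hg : Summable (fun n : ℕ => ‖A‖ ^ (n+1) / (n+1).factorial) :=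
    (Real.summable_pow_div_factorial ‖A‖).comp_injective (add_left_injective 1)
  have hfn : Summable (fun n : ℕ => ‖(((n+1).factorial : ℂ)⁻¹) • A ^ (n+1)‖) :=
    (norm_expSeries_summable' A).comp_injective (add_left_injective 1)
  have hexp : Real.exp ‖A‖ - 1 = ∑' n : ℕ, ‖A‖ ^ (n+1) / (n+1).factorial := by
    have h1 : Real.exp ‖A‖ = ∑' n : ℕ, ‖A‖ ^ n / n.factorial := by
      rw [Real.exp_eq_exp_ℝ, exp_eq_tsum_div]
    rw [h1, Summable.tsum_eq_zero_add (Real.summable_pow_div_factorial ‖A‖)]; simp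
  rw [h0, hexp]
  refine le_trans (norm_tsum_le_tsum_norm hfn) (Summable.tsum_le_tsum ?_ hfn hg)
  intro n
  rw [norm_smul]
  have h1 : ‖A ^ (n+1)‖ ≤ ‖A‖ ^ (n+1) := norm_pow_le' A (Nat.succ_pos n)
  have h2 : ‖(((n+1).factorial : ℂ)⁻¹)‖ = ((n+1).factorial : ℝ)⁻¹ := by simp
  rw [h2, div_eq_inv_mul]
  exact mul_le_mul_of_nonneg_left h1 (by positivity)

private lemma spectralNorm_nonneg' {m n : ℕ} (A : Matrix (Fin m) (Fin n) ℂ) :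
    0 ≤ spectralNormM A := by
  apply Real.sSup_nonneg
  rintro r ⟨x, hx, rfl⟩
  positivity

private lemma enorm_mulVec_le {m n : ℕ} (A : Matrix (Fin m) (Fin n) ℂ) (x : Fin n → ℂ) :
    Real.sqrt (∑ i, ‖(A *ᵥ x) i‖ ^ 2) ≤ spectralNormM A * Real.sqrt (∑ j, ‖x j‖ ^ 2) := by
  have key : ∀ v : Fin n → ℂ,
      Real.sqrt (∑ i, ‖(A *ᵥ v) i‖ ^ 2) ≤ ‖A‖ * Real.sqrt (∑ j, ‖v j‖ ^ 2) := by
    intro v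
    have h := Matrix.l2_opNorm_mulVec A ((WithLp.equiv 2 (Fin n → ℂ)).symm v)
    simpa [EuclideanSpace.norm_eq] using h
  by_cases hx : x = 0
  · subst hx
    simp only [Matrix.mulVec_zero]
    simp [Real.sqrt_eq_zero']
  · have hxpos : 0 < Real.sqrt (∑ j, ‖x j‖ ^ 2) := by
      rw [Real.sqrt_pos]
      obtain ⟨j, hj⟩ := Function.ne_iff.1 hx
      refine Finset.sum_pos' (fun i _ => by positivity)
        ⟨j, Finset.mem_univ j, by have := norm_pos_iff.2 hj; positivity⟩
    have hbdd : BddAbove {r : ℝ | ∃ v : Fin n → ℂ, v ≠ 0 ∧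
        r = Real.sqrt (∑ i, ‖(A *ᵥ v) i‖ ^ 2) / Real.sqrt (∑ j, ‖v j‖ ^ 2)} := by
      refine ⟨‖A‖, ?_⟩
      rintro r ⟨v, hv, rfl⟩
      have hvpos : 0 < Real.sqrt (∑ j, ‖v j‖ ^ 2) := by
        rw [Real.sqrt_pos]
        obtain ⟨j, hj⟩ := Function.ne_iff.1 hv
        refine Finset.sum_pos' (fun i _ => by positivity)
          ⟨j, Finset.mem_univ j, by have := norm_pos_iff.2 hj; positivity⟩
      exact (div_le_iff₀ hvpos).2 (key v)
    have hmem : Real.sqrt (∑ i, ‖(A *ᵥ x) i‖ ^ 2) / Real.sqrt (∑ j, ‖x j‖ ^ 2) ∈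
        {r : ℝ | ∃ v : Fin n → ℂ, v ≠ 0 ∧
          r = Real.sqrt (∑ i, ‖(A *ᵥ v) i‖ ^ 2) / Real.sqrt (∑ j, ‖v j‖ ^ 2)} :=
      ⟨x, hx, rfl⟩
    have h := le_csSup hbdd hmem
    rw [div_le_iff₀ hxpos] at h
    exact h

private lemma l2norm_le_spectralNorm {n : ℕ} (A : Matrix (Fin n) (Fin n) ℂ) :
    ‖A‖ ≤ spectralNormM A := by
  rw [Matrix.l2_opNorm_def]
  refine ContinuousLinearMap.opNorm_le_bound _ (spectralNorm_nonneg' A) ?_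
  intro v
  have h := enorm_mulVec_le A ((WithLp.equiv 2 (Fin n → ℂ)) v)
  have h1 : ‖(Matrix.toEuclideanLin.trans LinearMap.toContinuousLinearMap A) v‖ =
      Real.sqrt (∑ i, ‖(A *ᵥ (WithLp.equiv 2 (Fin n → ℂ)) v) i‖ ^ 2) := by
    simp [EuclideanSpace.norm_eq, Matrix.toEuclideanLin_apply]
  have h2 : ‖v‖ = Real.sqrt (∑ j, ‖(WithLp.equiv 2 (Fin n → ℂ)) v j‖ ^ 2) := by
    simp [EuclideanSpace.norm_eq]
  rw [h1, h2]
  exact h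

private lemma key_vec_bound {n : ℕ} (H : Matrix (Fin n) (Fin n) ℂ) (ℓ t : ℝ)
    (hH : spectralNormM H ≤ ℓ) (ht : 0 ≤ t) (w : Fin n → ℂ) :
    Real.sqrt (∑ i, ‖((mexp ((t:ℂ) • H))ᴴ *ᵥ w - w) i‖ ^ 2) ≤
      (Real.exp (t * ℓ) - 1) * Real.sqrt (∑ j, ‖w j‖ ^ 2) := by
  have hA : ‖(t:ℂ) • H‖ ≤ t * ℓ := by
    rw [norm_smul]
    have h0 : ‖(t:ℂ)‖ = t := by
      rw [Complex.norm_real, Real.norm_eq_abs, abs_of_nonneg ht]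
    rw [h0]
    exact mul_le_mul_of_nonneg_left (le_trans (l2norm_le_spectralNorm H) hH) ht
  have hvec : (mexp ((t:ℂ) • H))ᴴ *ᵥ w - w = (mexp ((t:ℂ) • H) - 1)ᴴ *ᵥ w := by
    rw [conjTranspose_sub, conjTranspose_one, Matrix.sub_mulVec, Matrix.one_mulVec]
  rw [hvec]
  have h1 : Real.sqrt (∑ i, ‖((mexp ((t:ℂ) • H) - 1)ᴴ *ᵥ w) i‖ ^ 2) ≤
      ‖(mexp ((t:ℂ) • H) - 1)ᴴ‖ * Real.sqrt (∑ j, ‖w j‖ ^ 2) := by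
    have h := Matrix.l2_opNorm_mulVec (mexp ((t:ℂ) • H) - 1)ᴴ
      ((WithLp.equiv 2 (Fin n → ℂ)).symm w)
    simpa [EuclideanSpace.norm_eq] using h
  refine le_trans h1 (mul_le_mul_of_nonneg_right ?_ (Real.sqrt_nonneg _))
  rw [Matrix.l2_opNorm_conjTranspose]
  refine le_trans (norm_mexp_sub_one_le _) ?_
  have := Real.exp_le_exp.2 hA
  linarith

end AuxAnalytic

section AuxMarkov

private lemma markov_contraction {N : ℕ} {P : Matrix (Fin N) (Fin N) ℝ} {π : Fin N → ℝ}
    (hP : IsMarkov P) (hπ : IsStationaryMC P π) (x : Fin N → ℂ) :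
    ∑ i, ‖((P.map Complex.ofReal)ᵀ *ᵥ x) i‖ ^ 2 / π i ≤ ∑ j, ‖x j‖ ^ 2 / π j := by
  have hπpos := hπ.1
  have happ : ∀ i, ((P.map Complex.ofReal)ᵀ *ᵥ x) i = ∑ j, (P j i : ℂ) * x j := by
    intro i
    simp [Matrix.mulVec, Matrix.transpose_apply, Matrix.map_apply, dotProduct]
  have step1 : ∀ i, ‖((P.map Complex.ofReal)ᵀ *ᵥ x) i‖ ^ 2 / π i ≤
      ∑ j, P j i * (‖x j‖ ^ 2 / π j) := by
    intro i
    have hnorm : ‖((P.map Complex.ofReal)ᵀ *ᵥ x) i‖ ≤ ∑ j, P j i * ‖x j‖ := by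
      rw [happ]
      refine le_trans (norm_sum_le _ _) (le_of_eq (Finset.sum_congr rfl fun j _ => ?_))
      rw [norm_mul, Complex.norm_real, Real.norm_eq_abs, abs_of_nonneg (hP.1 j i)]
    have hCS : (∑ j, P j i * ‖x j‖) ^ 2 ≤
        (∑ j, π j * P j i) * (∑ j, P j i * (‖x j‖ ^ 2 / π j)) := by
      refine Finset.sum_sq_le_sum_mul_sum_of_sq_eq_mul Finset.univ
        (fun j _ => mul_nonneg (hπpos j).le (hP.1 j i))
        (fun j _ => mul_nonneg (hP.1 j i) (div_nonneg (by positivity) (hπpos j).le))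
        (fun j _ => ?_)
      have hπj := (hπpos j).ne'
      field_simp
    have hsq : ‖((P.map Complex.ofReal)ᵀ *ᵥ x) i‖ ^ 2 ≤
        π i * ∑ j, P j i * (‖x j‖ ^ 2 / π j) := by
      calc ‖((P.map Complex.ofReal)ᵀ *ᵥ x) i‖ ^ 2 ≤ (∑ j, P j i * ‖x j‖) ^ 2 :=
            pow_le_pow_left₀ (norm_nonneg _) hnorm 2
        _ ≤ (∑ j, π j * P j i) * (∑ j, P j i * (‖x j‖ ^ 2 / π j)) := hCS
        _ = π i * ∑ j, P j i * (‖x j‖ ^ 2 / π j) := by rw [hπ.2.2 i]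
    rw [div_le_iff₀ (hπpos i)]
    calc ‖((P.map Complex.ofReal)ᵀ *ᵥ x) i‖ ^ 2 ≤
        π i * ∑ j, P j i * (‖x j‖ ^ 2 / π j) := hsq
      _ = (∑ j, P j i * (‖x j‖ ^ 2 / π j)) * π i := mul_comm _ _
  calc ∑ i, ‖((P.map Complex.ofReal)ᵀ *ᵥ x) i‖ ^ 2 / π i
      ≤ ∑ i, ∑ j, P j i * (‖x j‖ ^ 2 / π j) := Finset.sum_le_sum fun i _ => step1 i
    _ = ∑ j, (∑ i, P j i) * (‖x j‖ ^ 2 / π j) := by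
        rw [Finset.sum_comm]
        exact Finset.sum_congr rfl fun j _ => by rw [Finset.sum_mul]
    _ = ∑ j, ‖x j‖ ^ 2 / π j := Finset.sum_congr rfl fun j _ => by rw [hP.2 j, one_mul]

private lemma specExp_nonneg {N : ℕ} (P : Matrix (Fin N) (Fin N) ℝ) (π : Fin N → ℝ) :
    0 ≤ specExp P π := by
  apply Real.sSup_nonneg
  rintro r ⟨x, hx, hperp, rfl⟩
  exact div_nonneg (Real.sqrt_nonneg _) (Real.sqrt_nonneg _)

private lemma piNorm_pos {N : ℕ} {π : Fin N → ℝ} (hπpos : ∀ i, 0 < π i) {x : Fin N → ℂ}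
    (hx : x ≠ 0) : 0 < piNorm π x := by
  rw [piNorm, Real.sqrt_pos]
  obtain ⟨j, hj⟩ := Function.ne_iff.1 hx
  refine Finset.sum_pos' (fun i _ => by have := hπpos i; positivity)
    ⟨j, Finset.mem_univ j, by have := hπpos j; have := norm_pos_iff.2 hj; positivity⟩

private lemma slice_bound {N : ℕ} {P : Matrix (Fin N) (Fin N) ℝ} {π : Fin N → ℝ}
    (hP : IsMarkov P) (hπ : IsStationaryMC P π) (x : Fin N → ℂ)
    (hperp : piInner π x (fun i => (π i : ℂ)) = 0) :
    piNorm π ((P.map Complex.ofReal)ᵀ *ᵥ x) ≤ specExp P π * piNorm π x := by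
  by_cases hx : x = 0
  · subst hx
    simp only [Matrix.mulVec_zero]
    have h0 : piNorm π (0 : Fin N → ℂ) = 0 := by simp [piNorm]
    rw [h0, mul_zero]
  · have hxpos := piNorm_pos hπ.1 hx
    have hbdd : BddAbove {r : ℝ | ∃ v : Fin N → ℂ, v ≠ 0 ∧
        piInner π v (fun i => (π i : ℂ)) = 0 ∧
        r = piNorm π ((P.map Complex.ofReal)ᵀ *ᵥ v) / piNorm π v} := by
      refine ⟨1, ?_⟩
      rintro r ⟨v, hv, hvp, rfl⟩
      have hvpos := piNorm_pos hπ.1 hv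
      rw [div_le_one hvpos]
      exact Real.sqrt_le_sqrt (markov_contraction hP hπ v)
    have h := le_csSup hbdd ⟨x, hx, hperp, rfl⟩
    rw [div_le_iff₀ hxpos] at h
    exact h

end AuxMarkov

theorem stmt_13 {N m : ℕ} (hm : 1 ≤ m)
    (P : Matrix (Fin N) (Fin N) ℝ) (π : Fin N → ℝ)
    (hP : IsMarkov P) (hreg : IsRegularMC P) (hπ : IsStationaryMC P π)
    (ℓ t : ℝ) (hℓ : 0 ≤ ℓ) (ht : 0 < t)
    (H : Fin N → Matrix (Fin m) (Fin m) ℂ)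
    (hH : ∀ i, spectralNormM (H i) ≤ ℓ)
    (hmean : ∑ i, π i • H i = 0)
    (z zpar zperp : Fin N × Fin m → ℂ)
    (hdecz : z = zpar + zperp) (hzpar : memU π zpar) (hzperp : perpU π zperp)
    (y ypar yperp : Fin N × Fin m → ℂ)
    (hy : y = ((P.map Complex.ofReal) ⊗ₖ (1 : Matrix (Fin m) (Fin m) ℂ))ᵀ *ᵥ
      ((blockDiag' fun i => mexp ((t : ℂ) • H i))ᴴ *ᵥ zpar))
    (hdecy : y = ypar + yperp) (hypar : memU π ypar) (hyperp : perpU π yperp) :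
    piNormKron π yperp ≤ (specExp P π * (Real.exp (t * ℓ) - 1)) * piNormKron π zpar := by
  classical
  obtain ⟨w, hw⟩ := hzpar
  have hπpos := hπ.1
  have hπsum := hπ.2.1
  have hstat := hπ.2.2
  have hlam : 0 ≤ specExp P π := specExp_nonneg P π
  have hexp1 : (0:ℝ) ≤ Real.exp (t * ℓ) - 1 := by
    have h0 : (0:ℝ) ≤ t * ℓ := mul_nonneg ht.le hℓ
    have := Real.one_le_exp h0
    linarith
  have hπC : ∀ i, (π i : ℂ) ≠ 0 := fun i => Complex.ofReal_ne_zero.2 (hπpos i).ne'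
  have hπsumC : (∑ i, (π i : ℂ)) = 1 := by
    rw [← Complex.ofReal_sum, hπsum, Complex.ofReal_one]
  have hstatC : ∀ i, (∑ j, (P j i : ℂ) * (π j : ℂ)) = (π i : ℂ) := by
    intro i
    have := hstat i
    push_cast [← this]
    exact Finset.sum_congr rfl fun j _ => by ring
  have hrowC : ∀ j, (∑ i, (P j i : ℂ)) = 1 := by
    intro j
    rw [← Complex.ofReal_sum, hP.2 j, Complex.ofReal_one]
  -- main players
  set g : Fin N → Fin m → ℂ := fun i => (mexp ((t:ℂ) • H i))ᴴ *ᵥ w - w with hg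
  set c : Fin m → ℂ := fun a => ∑ i, (π i : ℂ) * g i a with hc
  set u : Fin N × Fin m → ℂ := fun p => (π p.1 : ℂ) * (g p.1 p.2 - c p.2) with hu
  set b : Fin N × Fin m → ℂ := fun p => ∑ j, (P j p.1 : ℂ) * u (j, p.2) with hb
  -- step A : E^H zpar
  have hE : ∀ p : Fin N × Fin m, ((_root_.blockDiag' fun i => mexp ((t:ℂ) • H i))ᴴ *ᵥ zpar) p
      = (π p.1 : ℂ) * (w p.2 + g p.1 p.2) := by
    intro p
    have h1 : ((_root_.blockDiag' fun i => mexp ((t:ℂ) • H i))ᴴ *ᵥ zpar) p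
        = ∑ q : Fin N × Fin m,
          (starRingEnd ℂ) ((_root_.blockDiag' fun i => mexp ((t:ℂ) • H i)) q p) * zpar q := by
      simp [Matrix.mulVec, dotProduct, Matrix.conjTranspose_apply]
    rw [h1, Fintype.sum_prod_type]
    have h2 : ∀ j : Fin N,
        (∑ bb, (starRingEnd ℂ) ((_root_.blockDiag' fun i => mexp ((t:ℂ) • H i)) (j, bb) p)
          * zpar (j, bb))
        = if j = p.1 then
            (∑ bb, (starRingEnd ℂ) ((mexp ((t:ℂ) • H j)) bb p.2) * zpar (j, bb)) else 0 := by
      intro j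
      by_cases hj : j = p.1 <;> simp [_root_.blockDiag', hj]
    rw [Finset.sum_congr rfl fun j _ => h2 j, Finset.sum_ite_eq' Finset.univ p.1]
    simp only [Finset.mem_univ, if_true]
    have h3 : w p.2 + g p.1 p.2
        = ∑ bb, (starRingEnd ℂ) ((mexp ((t:ℂ) • H p.1)) bb p.2) * w bb := by
      have h4 : ∀ x yy : ℂ, x + (yy - x) = yy := fun x yy => by ring
      simp only [hg, Pi.sub_apply, h4]
      simp [Matrix.mulVec, dotProduct, Matrix.conjTranspose_apply]
    rw [h3, Finset.mul_sum]
    exact Finset.sum_congr rfl fun bb _ => by rw [hw]; ring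
  -- step B : y pointwise
  have hyp : ∀ p : Fin N × Fin m,
      y p = ∑ j, (P j p.1 : ℂ) * ((π j : ℂ) * (w p.2 + g j p.2)) := by
    intro p
    have h1 : y p = ∑ q : Fin N × Fin m,
        ((P.map Complex.ofReal) ⊗ₖ (1 : Matrix (Fin m) (Fin m) ℂ)) q p
          * ((_root_.blockDiag' fun i => mexp ((t:ℂ) • H i))ᴴ *ᵥ zpar) q := by
      rw [hy]
      simp [Matrix.mulVec, dotProduct, Matrix.transpose_apply]
    rw [h1, Fintype.sum_prod_type]
    have h2 : ∀ j : Fin N,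
        (∑ bb, ((P.map Complex.ofReal) ⊗ₖ (1 : Matrix (Fin m) (Fin m) ℂ)) (j, bb) p
          * ((_root_.blockDiag' fun i => mexp ((t:ℂ) • H i))ᴴ *ᵥ zpar) (j, bb))
        = (P j p.1 : ℂ) * ((π j : ℂ) * (w p.2 + g j p.2)) := by
      intro j
      have h3 : ∀ bb : Fin m,
          ((P.map Complex.ofReal) ⊗ₖ (1 : Matrix (Fin m) (Fin m) ℂ)) (j, bb) p
            * ((_root_.blockDiag' fun i => mexp ((t:ℂ) • H i))ᴴ *ᵥ zpar) (j, bb)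
          = if bb = p.2 then
              (P j p.1 : ℂ) * ((π j : ℂ) * (w bb + g j bb)) else 0 := by
        intro bb
        rw [hE (j, bb)]
        by_cases hbb : bb = p.2 <;>
          simp [Matrix.kroneckerMap_apply, Matrix.one_apply, hbb, Matrix.map_apply, mul_assoc]
      rw [Finset.sum_congr rfl fun bb _ => h3 bb, Finset.sum_ite_eq' Finset.univ p.2]
      simp
    exact Finset.sum_congr rfl fun j _ => h2 j
  -- step C : y = apar + b
  have hyab : ∀ p : Fin N × Fin m,
      y p = (π p.1 : ℂ) * (w p.2 + c p.2) + b p := by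
    intro p
    rw [hyp p]
    have hexpand : ∀ j, (P j p.1 : ℂ) * ((π j : ℂ) * (w p.2 + g j p.2))
        = ((P j p.1 : ℂ) * (π j : ℂ)) * w p.2
          + (P j p.1 : ℂ) * ((π j : ℂ) * (g j p.2 - c p.2))
          + ((P j p.1 : ℂ) * (π j : ℂ)) * c p.2 := fun j => by ring
    rw [Finset.sum_congr rfl fun j _ => hexpand j]
    rw [Finset.sum_add_distrib, Finset.sum_add_distrib, ← Finset.sum_mul, ← Finset.sum_mul,
      hstatC p.1]
    have hbp : b p = ∑ j, (P j p.1 : ℂ) * ((π j : ℂ) * (g j p.2 - c p.2)) := by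
      simp only [hb, hu]
    rw [hbp]
    ring
  -- column sums of u and b vanish
  have hcolsum : ∀ a : Fin m, (∑ i, u (i, a)) = 0 := by
    intro a
    simp only [hu]
    have h1 : ∀ i : Fin N, (π i : ℂ) * (g i a - c a) = (π i : ℂ) * g i a - (π i : ℂ) * c a :=
      fun i => by ring
    rw [Finset.sum_congr rfl fun i _ => h1 i, Finset.sum_sub_distrib, ← Finset.sum_mul,
      hπsumC, one_mul]
    simp [hc]
  have hbcol : ∀ a : Fin m, (∑ i, b (i, a)) = 0 := by
    intro a
    simp only [hb]
    rw [Finset.sum_comm]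
    have h1 : ∀ j : Fin N, (∑ i : Fin N, (P j i : ℂ) * u (j, a)) = u (j, a) := by
      intro j
      rw [← Finset.sum_mul, hrowC j, one_mul]
    rw [Finset.sum_congr rfl fun j _ => h1 j]
    exact hcolsum a
  -- b is perpendicular to U
  have hbperp : perpU π b := by
    intro w'
    unfold piInnerKron
    have h1 : ∀ p : Fin N × Fin m,
        (starRingEnd ℂ) ((π p.1 : ℂ) * w' p.2) * b p / (π p.1 : ℂ)
        = (starRingEnd ℂ) (w' p.2) * b p := by
      intro p
      rw [_root_.map_mul, Complex.conj_ofReal]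
      have hne := hπC p.1
      field_simp
    rw [Finset.sum_congr rfl fun p _ => h1 p, Fintype.sum_prod_type_right]
    have h2 : ∀ a : Fin m, (∑ i : Fin N, (starRingEnd ℂ) (w' a) * b (i, a)) = 0 := by
      intro a
      rw [← Finset.mul_sum, hbcol a, mul_zero]
    rw [Finset.sum_congr rfl fun a _ => h2 a]
    exact Finset.sum_const_zero
  -- uniqueness of the decomposition : yperp = b
  have hzero : ∀ p, yperp p = b p := by
    have hdmem : memU π (fun p => yperp p - b p) := by
      obtain ⟨wy, hwy⟩ := hypar
      refine ⟨fun a => (w a + c a) - wy a, fun p => ?_⟩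
      show yperp p - b p = (π p.1 : ℂ) * ((w p.2 + c p.2) - wy p.2)
      have h1 : y p = ypar p + yperp p := by rw [hdecy]; rfl
      have h2 := hyab p
      rw [hwy p] at h1
      have h9 : yperp p - b p = (π p.1 : ℂ) * (w p.2 + c p.2) - (π p.1 : ℂ) * wy p.2 := by
        linear_combination h2 - h1
      rw [h9]
      ring
    have hdperp : perpU π (fun p => yperp p - b p) := by
      intro w'
      have h1 := hyperp w'
      have h2 := hbperp w'
      unfold piInnerKron at h1 h2 ⊢
      beta_reduce
      have h3 : ∀ p : Fin N × Fin m,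
          (starRingEnd ℂ) ((π p.1 : ℂ) * w' p.2) * (yperp p - b p) / (π p.1 : ℂ)
          = (starRingEnd ℂ) ((π p.1 : ℂ) * w' p.2) * yperp p / (π p.1 : ℂ)
            - (starRingEnd ℂ) ((π p.1 : ℂ) * w' p.2) * b p / (π p.1 : ℂ) := by
        intro p
        ring
      rw [Finset.sum_congr rfl fun p _ => h3 p, Finset.sum_sub_distrib, h1, h2, sub_zero]
    obtain ⟨w2, hw2⟩ := hdmem
    have hw2' : ∀ p : Fin N × Fin m, yperp p - b p = (π p.1 : ℂ) * w2 p.2 := hw2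
    have hkey := hdperp w2
    unfold piInnerKron at hkey
    beta_reduce at hkey
    have h4 : ∀ p : Fin N × Fin m,
        (starRingEnd ℂ) ((π p.1 : ℂ) * w2 p.2) * (yperp p - b p) / (π p.1 : ℂ)
        = ((π p.1 * Complex.normSq (w2 p.2) : ℝ) : ℂ) := by
      intro p
      rw [hw2' p, _root_.map_mul, Complex.conj_ofReal]
      have h5 : (starRingEnd ℂ) (w2 p.2) * w2 p.2 = (Complex.normSq (w2 p.2) : ℂ) := by
        rw [mul_comm, Complex.mul_conj]
      have hne := hπC p.1
      rw [Complex.ofReal_mul, div_eq_iff hne]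
      linear_combination ((π p.1 : ℂ))^2 * h5
    rw [Finset.sum_congr rfl fun p _ => h4 p, ← Complex.ofReal_sum,
      Complex.ofReal_eq_zero] at hkey
    have hterm : ∀ p : Fin N × Fin m, π p.1 * Complex.normSq (w2 p.2) = 0 := by
      intro p
      have hnn : ∀ q ∈ Finset.univ (α := Fin N × Fin m),
          0 ≤ π q.1 * Complex.normSq (w2 q.2) :=
        fun q _ => mul_nonneg (hπpos q.1).le (Complex.normSq_nonneg _)
      exact (Finset.sum_eq_zero_iff_of_nonneg hnn).1 hkey p (Finset.mem_univ p)
    intro p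
    have h6 := hterm p
    have h7 : Complex.normSq (w2 p.2) = 0 := by
      rcases mul_eq_zero.1 h6 with h | h
      · exact absurd h (hπpos p.1).ne'
      · exact h
    have h8 : w2 p.2 = 0 := Complex.normSq_eq_zero.1 h7
    have h10 := hw2' p
    rw [h8, mul_zero, sub_eq_zero] at h10
    exact h10
  -- squared norms
  set W : ℝ := ∑ a, ‖w a‖ ^ 2 with hW
  have hWnn : 0 ≤ W := Finset.sum_nonneg fun a _ => by positivity
  set Su : ℝ := ∑ p : Fin N × Fin m, ‖u p‖ ^ 2 / π p.1 with hSu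
  set Sb : ℝ := ∑ p : Fin N × Fin m, ‖b p‖ ^ 2 / π p.1 with hSb
  set Sg : ℝ := ∑ p : Fin N × Fin m, π p.1 * ‖g p.1 p.2‖ ^ 2 with hSg
  -- (3) Sb ≤ λ² Su
  have hSbSu : Sb ≤ specExp P π ^ 2 * Su := by
    have hslice_perp : ∀ a : Fin m,
        piInner π (fun i => u (i, a)) (fun i => (π i : ℂ)) = 0 := by
      intro a
      unfold piInner
      have h1 : ∀ i : Fin N, (starRingEnd ℂ) ((π i : ℂ)) * u (i, a) / (π i : ℂ)
          = u (i, a) := by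
        intro i
        rw [Complex.conj_ofReal]
        have hne := hπC i
        field_simp
      rw [Finset.sum_congr rfl fun i _ => h1 i]
      exact hcolsum a
    have hbs : ∀ p : Fin N × Fin m,
        b p = ((P.map Complex.ofReal)ᵀ *ᵥ (fun i => u (i, p.2))) p.1 := by
      intro p
      simp only [hb]
      simp [Matrix.mulVec, dotProduct, Matrix.transpose_apply, Matrix.map_apply]
    have hpera : ∀ a : Fin m,
        (∑ i, ‖((P.map Complex.ofReal)ᵀ *ᵥ (fun i' => u (i', a))) i‖ ^ 2 / π i)
          ≤ specExp P π ^ 2 * (∑ i, ‖u (i, a)‖ ^ 2 / π i) := by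
      intro a
      have h1 := slice_bound hP hπ (fun i => u (i, a)) (hslice_perp a)
      have h2 : (0:ℝ) ≤ ∑ i, ‖((P.map Complex.ofReal)ᵀ *ᵥ (fun i' => u (i', a))) i‖ ^ 2 / π i :=
        Finset.sum_nonneg fun i _ => div_nonneg (by positivity) (hπpos i).le
      have h3 : (0:ℝ) ≤ ∑ i, ‖u (i, a)‖ ^ 2 / π i :=
        Finset.sum_nonneg fun i _ => div_nonneg (by positivity) (hπpos i).le
      have h4 := pow_le_pow_left₀ (Real.sqrt_nonneg _) h1 2
      rw [mul_pow] at h4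
      unfold piNorm at h4
      rw [Real.sq_sqrt h2, Real.sq_sqrt h3] at h4
      exact h4
    calc Sb = ∑ a : Fin m, ∑ i : Fin N, ‖b (i, a)‖ ^ 2 / π i := by
          rw [hSb, Fintype.sum_prod_type_right]
      _ ≤ ∑ a : Fin m, specExp P π ^ 2 * (∑ i, ‖u (i, a)‖ ^ 2 / π i) := by
          refine Finset.sum_le_sum fun a _ => ?_
          refine le_trans (le_of_eq (Finset.sum_congr rfl fun i _ => ?_)) (hpera a)
          rw [hbs (i, a)]
      _ = specExp P π ^ 2 * Su := by
          rw [← Finset.mul_sum, hSu, Fintype.sum_prod_type_right]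
  -- (4) Su ≤ Sg
  have hSuSg : Su ≤ Sg := by
    have hper : ∀ a : Fin m,
        (∑ i, ‖u (i, a)‖ ^ 2 / π i) ≤ ∑ i, π i * ‖g i a‖ ^ 2 := by
      intro a
      have hcross : (∑ i, π i * (((g i a - c a) * (starRingEnd ℂ) (c a)).re)) = 0 := by
        have h1 : ∀ i : Fin N, π i * (((g i a - c a) * (starRingEnd ℂ) (c a)).re)
            = ((((π i : ℂ) * (g i a - c a)) * (starRingEnd ℂ) (c a)).re) := by
          intro i
          rw [mul_assoc, Complex.re_ofReal_mul]
        rw [Finset.sum_congr rfl fun i _ => h1 i, ← Complex.re_sum]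
        have h2 : (∑ i, ((π i : ℂ) * (g i a - c a)) * (starRingEnd ℂ) (c a))
            = (∑ i, (π i : ℂ) * (g i a - c a)) * (starRingEnd ℂ) (c a) := by
          rw [Finset.sum_mul]
        rw [h2]
        have h3 := hcolsum a
        simp only [hu] at h3
        rw [h3, zero_mul, Complex.zero_re]
      have hgd : ∀ i : Fin N, ‖g i a‖ ^ 2
          = ‖g i a - c a‖ ^ 2 + ‖c a‖ ^ 2
            + 2 * (((g i a - c a) * (starRingEnd ℂ) (c a)).re) := by
        intro i
        have h1 : g i a = (g i a - c a) + c a := by ring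
        nth_rewrite 1 [h1]
        have h2 := Complex.normSq_add (g i a - c a) (c a)
        simp only [← Complex.sq_norm] at h2
        rw [h2]
      have hueq : ∀ i : Fin N, ‖u (i, a)‖ ^ 2 / π i = π i * ‖g i a - c a‖ ^ 2 := by
        intro i
        simp only [hu]
        rw [norm_mul, Complex.norm_real, Real.norm_eq_abs, abs_of_nonneg (hπpos i).le, mul_pow]
        have hne := (hπpos i).ne'
        field_simp
      rw [Finset.sum_congr rfl fun i _ => hueq i,
        Finset.sum_congr rfl fun i _ => congrArg (π i * ·) (hgd i)]
      have hexp2 : ∀ i : Fin N, π i * (‖g i a - c a‖ ^ 2 + ‖c a‖ ^ 2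
            + 2 * (((g i a - c a) * (starRingEnd ℂ) (c a)).re))
          = π i * ‖g i a - c a‖ ^ 2 + π i * ‖c a‖ ^ 2
            + 2 * (π i * (((g i a - c a) * (starRingEnd ℂ) (c a)).re)) := fun i => by ring
      rw [Finset.sum_congr rfl fun i _ => hexp2 i, Finset.sum_add_distrib,
        Finset.sum_add_distrib, ← Finset.mul_sum, hcross, mul_zero, add_zero,
        ← Finset.sum_mul, hπsum, one_mul]
      have hcnn : (0:ℝ) ≤ ‖c a‖ ^ 2 := by positivity
      linarith
    calc Su = ∑ a : Fin m, ∑ i : Fin N, ‖u (i, a)‖ ^ 2 / π i := by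
          rw [hSu, Fintype.sum_prod_type_right]
      _ ≤ ∑ a : Fin m, ∑ i : Fin N, π i * ‖g i a‖ ^ 2 := Finset.sum_le_sum fun a _ => hper a
      _ = Sg := by rw [hSg, Fintype.sum_prod_type_right]
  -- (5) Sg ≤ (e^{tℓ}-1)² W
  have hSgW : Sg ≤ (Real.exp (t * ℓ) - 1) ^ 2 * W := by
    have hper : ∀ i : Fin N, (∑ a, ‖g i a‖ ^ 2) ≤ (Real.exp (t * ℓ) - 1) ^ 2 * W := by
      intro i
      have h1 := key_vec_bound (H i) ℓ t (hH i) ht.le w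
      have h2 : (0:ℝ) ≤ ∑ a, ‖g i a‖ ^ 2 := Finset.sum_nonneg fun a _ => by positivity
      have h3 := pow_le_pow_left₀ (Real.sqrt_nonneg _) h1 2
      rw [mul_pow] at h3
      have h5 : ∀ a : Fin m, g i a = ((mexp ((t:ℂ) • H i))ᴴ *ᵥ w - w) a := fun a => rfl
      rw [Real.sq_sqrt hWnn] at h3
      have h6 : Real.sqrt (∑ a, ‖((mexp ((t:ℂ) • H i))ᴴ *ᵥ w - w) a‖ ^ 2) ^ 2
          = ∑ a, ‖((mexp ((t:ℂ) • H i))ᴴ *ᵥ w - w) a‖ ^ 2 :=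
        Real.sq_sqrt (Finset.sum_nonneg fun a _ => by positivity)
      rw [h6] at h3
      calc (∑ a, ‖g i a‖ ^ 2) = ∑ a, ‖((mexp ((t:ℂ) • H i))ᴴ *ᵥ w - w) a‖ ^ 2 :=
            Finset.sum_congr rfl fun a _ => by rw [h5 a]
        _ ≤ (Real.exp (t * ℓ) - 1) ^ 2 * W := h3
    calc Sg = ∑ i : Fin N, π i * (∑ a, ‖g i a‖ ^ 2) := by
          rw [hSg, Fintype.sum_prod_type]
          exact Finset.sum_congr rfl fun i _ => by rw [Finset.mul_sum]
      _ ≤ ∑ i : Fin N, π i * ((Real.exp (t * ℓ) - 1) ^ 2 * W) :=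
          Finset.sum_le_sum fun i _ => mul_le_mul_of_nonneg_left (hper i) (hπpos i).le
      _ = (Real.exp (t * ℓ) - 1) ^ 2 * W := by
          rw [← Finset.sum_mul, hπsum, one_mul]
  -- zpar norm
  have hzparW : piNormKron π zpar = Real.sqrt W := by
    unfold piNormKron
    congr 1
    rw [Fintype.sum_prod_type]
    calc (∑ i : Fin N, ∑ a : Fin m, ‖zpar (i, a)‖ ^ 2 / π i)
        = ∑ i : Fin N, π i * W := by
          refine Finset.sum_congr rfl fun i _ => ?_
          rw [hW, Finset.mul_sum]
          refine Finset.sum_congr rfl fun a _ => ?_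
          rw [hw (i, a), norm_mul, Complex.norm_real, Real.norm_eq_abs,
            abs_of_nonneg (hπpos i).le, mul_pow]
          have hne := (hπpos i).ne'
          field_simp
      _ = W := by rw [← Finset.sum_mul, hπsum, one_mul]
  -- conclusion
  have hyperpb : piNormKron π yperp = Real.sqrt Sb := by
    unfold piNormKron
    rw [hSb]
    congr 1
    exact Finset.sum_congr rfl fun p _ => by rw [hzero p]
  rw [hyperpb, hzparW]
  have hchain : Sb ≤ specExp P π ^ 2 * ((Real.exp (t * ℓ) - 1) ^ 2 * W) := by
    refine le_trans hSbSu ?_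
    exact mul_le_mul_of_nonneg_left (le_trans hSuSg hSgW) (sq_nonneg _)
  refine le_trans (Real.sqrt_le_sqrt hchain) (le_of_eq ?_)
  rw [Real.sqrt_mul (sq_nonneg _), Real.sqrt_mul (sq_nonneg _),
    Real.sqrt_sq hlam, Real.sqrt_sq hexp1, mul_assoc]
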